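/- The Partial Sum algorithm is ε-differentially private: let ε > 0 and let Lap(1/ε) be the Borel measure on ℝ with density x ↦ (ε/2)·exp(−ε·|x|) with respect to Lebesgue measure. For all n and all q₁, q₂ : Fin n → ℝ such that there exists an index j with q₁ i = q₂ i for all i ≠ j and |q₁ j − q₂ j| ≤ 1, and for every measurable set E ⊆ ℝ, Lap(1/ε){η | (∑ i, q₁ i) + η ∈ E} ≤ exp(ε) · Lap(1/ε){η | (∑ i, q₂ i) + η ∈ E}. -/
import Mathlib


open MeasureTheory
open scoped ENNReal

/-- The Partial Sum algorithm is `ε`-differentially private. -/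
theorem partial_sum_dp (ε : ℝ) (hε : 0 < ε)
    (Lap : Measure ℝ)
    (hLap : Lap = volume.withDensity
      (fun x => ENNReal.ofReal ((ε / 2) * Real.exp (-ε * |x|))))
    (n : ℕ) (q₁ q₂ : Fin n → ℝ)
    (hadj : ∃ j, (∀ i, i ≠ j → q₁ i = q₂ i) ∧ |q₁ j - q₂ j| ≤ 1)
    (E : Set ℝ) (hE : MeasurableSet E) :
    Lap {η | (∑ i, q₁ i) + η ∈ E} ≤
      ENNReal.ofReal (Real.exp ε) * Lap {η | (∑ i, q₂ i) + η ∈ E} := by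
  obtain ⟨j, hne, hj⟩ := hadj
  set s₁ := ∑ i, q₁ i with hs₁
  set s₂ := ∑ i, q₂ i with hs₂
  set t : ℝ := s₂ - s₁ with htdef
  have ht : |t| ≤ 1 := by
    have hsum : s₂ - s₁ = q₂ j - q₁ j := by
      rw [hs₁, hs₂, ← Finset.sum_sub_distrib]
      rw [Finset.sum_eq_single j]
      · intro i _ hij
        rw [hne i hij]; ring
      · intro h; exact absurd (Finset.mem_univ j) h
    rw [htdef, hsum, abs_sub_comm]
    exact hj
  set f : ℝ → ℝ≥0∞ := fun x => ENNReal.ofReal ((ε / 2) * Real.exp (-ε * |x|)) with hf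
  have habs : Measurable fun x : ℝ => |x| := measurable_norm
  have hfm : Measurable f :=
    ((habs.const_mul (-ε)).exp.const_mul (ε / 2)).ennreal_ofReal
  have hA₁ : MeasurableSet {η : ℝ | s₁ + η ∈ E} := (measurable_const_add s₁) hE
  have hA₂ : MeasurableSet {η : ℝ | s₂ + η ∈ E} := (measurable_const_add s₂) hE
  rw [hLap, withDensity_apply _ hA₁, withDensity_apply _ hA₂]
  -- pointwise bound
  have key : ∀ y : ℝ, f (y + t) ≤ ENNReal.ofReal (Real.exp ε) * f y := by
    intro y
    rw [hf, ← ENNReal.ofReal_mul (Real.exp_nonneg ε)]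
    apply ENNReal.ofReal_le_ofReal
    rw [show Real.exp ε * (ε / 2 * Real.exp (-ε * |y|)) =
        ε / 2 * (Real.exp ε * Real.exp (-ε * |y|)) by ring, ← Real.exp_add]
    apply mul_le_mul_of_nonneg_left _ (by positivity)
    apply Real.exp_le_exp.2
    have h1 : |y| - |y + t| ≤ |t| := by
      have := abs_sub_abs_le_abs_sub y (y + t)
      simpa [abs_sub_comm] using this
    nlinarith [abs_nonneg t, abs_nonneg y, abs_nonneg (y + t)]
  calc ∫⁻ η in {η : ℝ | s₁ + η ∈ E}, f η
      = ∫⁻ η, ({η : ℝ | s₂ + η ∈ E}).indicator (fun y => f (y + t)) (η + (-t)) := by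
        rw [← lintegral_indicator hA₁]
        congr 1
        funext η
        by_cases hη : s₁ + η ∈ E
        · have hη' : s₂ + (η + -t) ∈ E := by
            have : s₂ + (η + -t) = s₁ + η := by rw [htdef]; ring
            rwa [this]
          have m1 : η ∈ {η : ℝ | s₁ + η ∈ E} := hη
          have m2 : η + -t ∈ {η : ℝ | s₂ + η ∈ E} := hη'
          rw [Set.indicator_of_mem m1, Set.indicator_of_mem m2]
          congr 1
          ring
        · have hη' : s₂ + (η + -t) ∉ E := by
            have : s₂ + (η + -t) = s₁ + η := by rw [htdef]; ring
            rwa [this]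
          have m1 : η ∉ {η : ℝ | s₁ + η ∈ E} := hη
          have m2 : η + -t ∉ {η : ℝ | s₂ + η ∈ E} := hη'
          rw [Set.indicator_of_notMem m1, Set.indicator_of_notMem m2]
    _ = ∫⁻ η, ({η : ℝ | s₂ + η ∈ E}).indicator (fun y => f (y + t)) η :=
        lintegral_add_right_eq_self _ (-t)
    _ = ∫⁻ η in {η : ℝ | s₂ + η ∈ E}, f (η + t) := lintegral_indicator hA₂ _
    _ ≤ ∫⁻ η in {η : ℝ | s₂ + η ∈ E}, ENNReal.ofReal (Real.exp ε) * f η :=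
        lintegral_mono fun y => key y
    _ = ENNReal.ofReal (Real.exp ε) * ∫⁻ η in {η : ℝ | s₂ + η ∈ E}, f η :=
        lintegral_const_mul _ hfm
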